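/- Let B, C be K-algebras with B finitely generated by a finite set G, and let V be a K-vector space basis of C. For each finite subset L ⊆ V let A_L be the universal algebra with morphism φ_L : B → C ⊗ A_L such that φ_L(b) lies in span{c ⊗ a : c ∈ L} for all b ∈ G. For L₁ ⊆ L₂ let A^{L₂}_{L₁} : A_{L₂} → A_{L₁} be the induced morphism. Then the resulting pro-algebra A = {A_L} indexed by finite subsets of V, together with the pro-morphism h = [{φ_L}] : B → C ⊗ A, satisfies: for every pro-algebra E and pro-morphism e : B → C ⊗ E there is a unique pro-morphism ê : A → E with e = (id ⊗ ê) ∘ h. -/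

import Mathlib

open TensorProduct

section

variable (K : Type) [Field K]

/-- The data of a pro-algebra: an indexed family of algebras with transition
morphisms (laws are not needed to state compatibility). -/
structure ProAlgData (J : Type) [Preorder J] where
  obj : J → AlgCat K
  tr : ∀ {j j' : J}, j ≤ j' → ((obj j' : Type) →ₐ[K] (obj j : Type))

/-- A pro-algebra: an indexed family of algebras with functorial transition
morphisms. -/
structure ProAlg (J : Type) [Preorder J] extends ProAlgData K J where
  tr_id : ∀ j : J, tr (le_refl j) = AlgHom.id K (obj j)
  tr_comp : ∀ {j j' j'' : J} (h : j ≤ j') (h' : j' ≤ j''),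
    (tr h).comp (tr h') = tr (h.trans h')

variable {K}

/-- Compatibility of a set of algebra morphisms between two pro-algebras. -/
def CompatibleA {I J : Type} [Preorder I] [Preorder J]
    (P : ProAlgData K I) (E : ProAlgData K J)
    (Φ : Set (Σ (i : I) (j : J), ((P.obj i : Type) →ₐ[K] (E.obj j : Type)))) :
    Prop :=
  ∀ f ∈ Φ, ∀ f' ∈ Φ, ∀ hj : f.2.1 ≤ f'.2.1,
    ∃ (i'' : I) (hi : f.1 ≤ i'') (hi' : f'.1 ≤ i''),
      f.2.2.comp (P.tr hi) = (E.tr hj).comp (f'.2.2.comp (P.tr hi'))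

/-- A represented pro-morphism between two pro-algebras. -/
def RepresentedA {I J : Type} [Preorder I] [Preorder J]
    (P : ProAlgData K I) (E : ProAlgData K J)
    (Φ : Set (Σ (i : I) (j : J), ((P.obj i : Type) →ₐ[K] (E.obj j : Type)))) :
    Prop :=
  (∀ j : J, ∃ (j' : J) (_ : j ≤ j') (i : I)
      (g : (P.obj i : Type) →ₐ[K] (E.obj j' : Type)),
    (⟨i, j', g⟩ : Σ (i : I) (j : J),
      ((P.obj i : Type) →ₐ[K] (E.obj j : Type))) ∈ Φ) ∧
  CompatibleA P E Φ


private lemma span_mono_aux {K C : Type} [Field K] [Ring C] [Algebra K C]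
    {ι : Type} (V : Module.Basis ι K C) (R : Type) [Ring R] [Algebra K R]
    {s t : Finset ι} (hst : s ⊆ t) :
    Submodule.span K {x : C ⊗[K] R | ∃ i ∈ s, ∃ a : R, x = V i ⊗ₜ[K] a} ≤
    Submodule.span K {x : C ⊗[K] R | ∃ i ∈ t, ∃ a : R, x = V i ⊗ₜ[K] a} :=
  Submodule.span_mono fun _ ⟨i, hi, a, hy⟩ => ⟨i, hst hi, a, hy⟩

private lemma mem_span_aux {K C : Type} [Field K] [Ring C] [Algebra K C]
    {ι : Type} (V : Module.Basis ι K C) (R : Type) [Ring R] [Algebra K R]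
    (x : C ⊗[K] R) :
    ∃ s : Finset ι, x ∈ Submodule.span K
      {y : C ⊗[K] R | ∃ i ∈ s, ∃ a : R, y = V i ⊗ₜ[K] a} := by
  classical
  induction x using TensorProduct.induction_on with
  | zero => exact ⟨∅, Submodule.zero_mem _⟩
  | tmul c a =>
    refine ⟨(V.repr c).support, ?_⟩
    have hc : (∑ i ∈ (V.repr c).support, V.repr c i • V i) = c := by
      conv_rhs => rw [← V.linearCombination_repr c]
      rw [Finsupp.linearCombination_apply, Finsupp.sum]
    have key : c ⊗ₜ[K] a = ∑ i ∈ (V.repr c).support, V.repr c i • (V i ⊗ₜ[K] a) := by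
      conv_lhs => rw [← hc]
      rw [TensorProduct.sum_tmul]
      exact Finset.sum_congr rfl fun i _ => (TensorProduct.smul_tmul' _ _ _).symm
    rw [key]
    exact Submodule.sum_mem _ fun i hi =>
      Submodule.smul_mem _ _ (Submodule.subset_span ⟨i, hi, a, rfl⟩)
  | add x y hx hy =>
    obtain ⟨s, hs⟩ := hx
    obtain ⟨t, ht⟩ := hy
    exact ⟨s ∪ t, Submodule.add_mem _
      (span_mono_aux V R Finset.subset_union_left hs)
      (span_mono_aux V R Finset.subset_union_right ht)⟩

private lemma map_id_comp {K C R S T : Type} [Field K] [Ring C] [Algebra K C]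
    [Ring R] [Algebra K R] [Ring S] [Algebra K S] [Ring T] [Algebra K T]
    (f : S →ₐ[K] T) (g : R →ₐ[K] S) :
    Algebra.TensorProduct.map (AlgHom.id K C) (f.comp g) =
    (Algebra.TensorProduct.map (AlgHom.id K C) f).comp
      (Algebra.TensorProduct.map (AlgHom.id K C) g) := by
  ext x <;> simp

/-- the pro-algebra `A = {A_L}` (indexed by finite subsets `L` of
a basis `V` of `C`) with the pro-morphism `h = [{φ_L}] : B → C ⊗ A` is
universal: every pro-morphism `e : B → C ⊗ E` into a pro-algebra `E` factors
uniquely through `h` via a pro-morphism `ê : A → E`. -/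
theorem stmt_3 {B C : Type} [Ring B] [Algebra K B] [Ring C] [Algebra K C]
    (G : Finset B) (hG : Algebra.adjoin K (G : Set B) = ⊤)
    {ι : Type} (V : Module.Basis ι K C)
    -- the universal algebras A_L with their morphisms φ_L:
    (A : Finset ι → AlgCat K)
    (φ : ∀ L : Finset ι, B →ₐ[K] C ⊗[K] (A L))
    (hspan : ∀ L : Finset ι, ∀ b ∈ G, φ L b ∈ Submodule.span K
      {x : C ⊗[K] (A L) | ∃ i ∈ L, ∃ a : A L, x = V i ⊗ₜ[K] a})
    (huniv : ∀ (L : Finset ι) (E : Type) [Ring E] [Algebra K E]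
        (ψ : B →ₐ[K] C ⊗[K] E),
      (∀ b ∈ G, ψ b ∈ Submodule.span K
        {x : C ⊗[K] E | ∃ i ∈ L, ∃ a : E, x = V i ⊗ₜ[K] a}) →
      ∃! α : (A L : Type) →ₐ[K] E,
        ψ = (Algebra.TensorProduct.map (AlgHom.id K C) α).comp (φ L))
    -- the induced transition morphisms A^{L₂}_{L₁}:
    (tr : ∀ {L₁ L₂ : Finset ι}, L₁ ≤ L₂ → ((A L₂ : Type) →ₐ[K] (A L₁ : Type)))
    (htr : ∀ {L₁ L₂ : Finset ι} (h : L₁ ≤ L₂),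
      φ L₁ = (Algebra.TensorProduct.map (AlgHom.id K C) (tr h)).comp (φ L₂)) :
    -- universal property of the pro-algebra (A, h):
    ∀ {J : Type} [Preorder J] [IsDirected J (· ≤ ·)] (E : ProAlg K J)
      -- a pro-morphism e : B → C ⊗ E, given as a compatible family:
      (e : ∀ j : J, B →ₐ[K] C ⊗[K] (E.obj j)),
      (∀ {j j' : J} (h : j ≤ j'),
        e j = (Algebra.TensorProduct.map (AlgHom.id K C) (E.tr h)).comp (e j')) →
      -- there is a pro-morphism ê : A → E, given by a represented set Ω, ...
      ∃ Ω : Set (Σ (L : Finset ι) (j : J),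
          ((A L : Type) →ₐ[K] (E.obj j : Type))),
        RepresentedA ⟨A, fun h => tr h⟩ E.toProAlgData Ω ∧
        -- ... with e = (id ⊗ ê) ∘ h, ...
        (∀ ω ∈ Ω, e ω.2.1 =
          (Algebra.TensorProduct.map (AlgHom.id K C) ω.2.2).comp (φ ω.1)) ∧
        -- ... unique in the sense that any other such represented
        -- pro-morphism is equivalent to Ω:
        (∀ Ω' : Set (Σ (L : Finset ι) (j : J),
            ((A L : Type) →ₐ[K] (E.obj j : Type))),
          RepresentedA ⟨A, fun h => tr h⟩ E.toProAlgData Ω' →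
          (∀ ω ∈ Ω', e ω.2.1 =
            (Algebra.TensorProduct.map (AlgHom.id K C) ω.2.2).comp (φ ω.1)) →
          CompatibleA ⟨A, fun h => tr h⟩ E.toProAlgData (Ω ∪ Ω')) := by
  intro J _ _ E e he
  classical
  -- the factorization property implies the span condition
  have hPspan : ∀ (L : Finset ι) (j : J) (α : (A L : Type) →ₐ[K] (E.obj j : Type)),
      e j = (Algebra.TensorProduct.map (AlgHom.id K C) α).comp (φ L) →
      ∀ b ∈ G, e j b ∈ Submodule.span K
        {x : C ⊗[K] (E.obj j) | ∃ i ∈ L, ∃ a : E.obj j, x = V i ⊗ₜ[K] a} := by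
    intro L j α hω b hb
    have h1 := hspan L b hb
    have h2 : e j b = (Algebra.TensorProduct.map (AlgHom.id K C) α) (φ L b) :=
      AlgHom.congr_fun hω b
    rw [h2]
    have h3 := Submodule.mem_map_of_mem
      (f := (Algebra.TensorProduct.map (AlgHom.id K C) α).toLinearMap) h1
    rw [Submodule.map_span] at h3
    refine Submodule.span_mono ?_ h3
    rintro y ⟨x, ⟨i, hi, a, rfl⟩, rfl⟩
    exact ⟨i, hi, α a, by simp⟩
  -- any two factorizing morphisms are compatible
  have hcompat : ∀ (L : Finset ι) (j : J) (α : (A L : Type) →ₐ[K] (E.obj j : Type))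
      (L' : Finset ι) (j' : J) (α' : (A L' : Type) →ₐ[K] (E.obj j' : Type)),
      e j = (Algebra.TensorProduct.map (AlgHom.id K C) α).comp (φ L) →
      e j' = (Algebra.TensorProduct.map (AlgHom.id K C) α').comp (φ L') →
      ∀ hj : j ≤ j', ∃ (L'' : Finset ι) (hi : L ≤ L'') (hi' : L' ≤ L''),
        α.comp (tr hi) = (E.tr hj).comp (α'.comp (tr hi')) := by
    intro L j α L' j' α' hω hω' hj
    refine ⟨L ∪ L', Finset.subset_union_left, Finset.subset_union_right, ?_⟩
    have hsp : ∀ b ∈ G, e j b ∈ Submodule.span K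
        {x : C ⊗[K] (E.obj j) | ∃ i ∈ L ∪ L', ∃ a : E.obj j, x = V i ⊗ₜ[K] a} :=
      fun b hb => span_mono_aux V _ Finset.subset_union_left
        (hPspan L j α hω b hb)
    obtain ⟨β, hβ, hβu⟩ := huniv (L ∪ L') (E.obj j) (e j) hsp
    have e1 : e j = (Algebra.TensorProduct.map (AlgHom.id K C)
        (α.comp (tr Finset.subset_union_left))).comp (φ (L ∪ L')) := by
      rw [map_id_comp, AlgHom.comp_assoc, ← htr Finset.subset_union_left]
      exact hω
    have e2 : e j = (Algebra.TensorProduct.map (AlgHom.id K C)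
        ((E.tr hj).comp (α'.comp (tr Finset.subset_union_right)))).comp
        (φ (L ∪ L')) := by
      rw [map_id_comp, map_id_comp, AlgHom.comp_assoc, AlgHom.comp_assoc,
        ← htr Finset.subset_union_right, ← hω', ← he hj]
    exact (hβu _ e1).trans ((hβu _ e2).symm)
  -- existence of a representative for each j
  have hex : ∀ j : J, ∃ (L : Finset ι) (α : (A L : Type) →ₐ[K] (E.obj j : Type)),
      e j = (Algebra.TensorProduct.map (AlgHom.id K C) α).comp (φ L) := by
    intro j
    have key : ∀ S : Finset B, ∃ L : Finset ι, ∀ b ∈ S,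
        e j b ∈ Submodule.span K
          {x : C ⊗[K] (E.obj j) | ∃ i ∈ L, ∃ a : E.obj j, x = V i ⊗ₜ[K] a} := by
      intro S
      induction S using Finset.induction_on with
      | empty => exact ⟨∅, fun b hb => absurd hb (Finset.notMem_empty b)⟩
      | @insert b S hb ih =>
        obtain ⟨L, hL⟩ := ih
        obtain ⟨s, hs⟩ := mem_span_aux V (E.obj j) (e j b)
        refine ⟨L ∪ s, fun b' hbm => ?_⟩
        rcases Finset.mem_insert.mp hbm with rfl | hbm
        · exact span_mono_aux V _ Finset.subset_union_right hs
        · exact span_mono_aux V _ Finset.subset_union_left (hL b' hbm)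
    obtain ⟨L, hsp⟩ := key G
    obtain ⟨α, hα, -⟩ := huniv L (E.obj j) (e j) hsp
    exact ⟨L, α, hα⟩
  refine ⟨{ω | e ω.2.1 =
      (Algebra.TensorProduct.map (AlgHom.id K C) ω.2.2).comp (φ ω.1)},
    ⟨?_, ?_⟩, fun ω hω => hω, ?_⟩
  · intro j
    obtain ⟨L, α, h⟩ := hex j
    exact ⟨j, le_refl j, L, α, h⟩
  · rintro ⟨L, j, α⟩ hω ⟨L', j', α'⟩ hω' hj
    exact hcompat L j α L' j' α' hω hω' hj
  · intro Ω' _ hΩ'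
    rintro ⟨L, j, α⟩ hf ⟨L', j', α'⟩ hf' hj
    have hfP := hf.elim id fun h => hΩ' _ h
    have hf'P := hf'.elim id fun h => hΩ' _ h
    exact hcompat L j α L' j' α' hfP hf'P hj


end
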